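/- Let k11, k12, k21, k22 ∈ M₂(ℝ) be the blocks of an invertible 4×4 matrix k with inverse given by blocks, and let X ∈ M₂(ℝ) be such that k21 X + k22 is invertible. Then det(k21 X + k22)⁻¹ · det(k) = det(k11 − (k11 X + k12)(k21 X + k22)⁻¹ k21). In particular for det(k) = 1, det(k21X+k22)⁻¹ = det(k11 − (k11X+k12)(k21X+k22)⁻¹k21). -/

import Mathlib

open Matrix

set_option maxHeartbeats 1000000

/-- For k = [[k11,k12],[k21,k22]] invertible in 2×2 blocks and X with k21X+k22
    invertible: det(k21X+k22)⁻¹ · det k = det(k11 − (k11X+k12)(k21X+k22)⁻¹k21);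
    in particular when det k = 1,
    det(k21X+k22)⁻¹ = det(k11 − (k11X+k12)(k21X+k22)⁻¹k21). -/
theorem conformal_factor_identity
    (k11 k12 k21 k22 X : Matrix (Fin 2) (Fin 2) ℝ)
    (hk : IsUnit (Matrix.fromBlocks k11 k12 k21 k22).det)
    (hX : IsUnit (k21 * X + k22).det) :
    ((k21 * X + k22).det)⁻¹ * (Matrix.fromBlocks k11 k12 k21 k22).det
      = (k11 - (k11 * X + k12) * (k21 * X + k22)⁻¹ * k21).det ∧
    ((Matrix.fromBlocks k11 k12 k21 k22).det = 1 →
      ((k21 * X + k22).det)⁻¹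
        = (k11 - (k11 * X + k12) * (k21 * X + k22)⁻¹ * k21).det) := by
  have hD : Invertible (k21 * X + k22) := (k21 * X + k22).invertibleOfIsUnitDet hX
  have h1 : Matrix.fromBlocks k11 k12 k21 k22 * Matrix.fromBlocks 1 X 0 1
      = Matrix.fromBlocks k11 (k11 * X + k12) k21 (k21 * X + k22) := by
    rw [Matrix.fromBlocks_multiply]
    simp
  have key : (Matrix.fromBlocks k11 k12 k21 k22).det
      = (k21 * X + k22).det * (k11 - (k11 * X + k12) * (k21 * X + k22)⁻¹ * k21).det := by
    have h2 : (Matrix.fromBlocks k11 (k11 * X + k12) k21 (k21 * X + k22)).det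
        = (k21 * X + k22).det * (k11 - (k11 * X + k12) * (k21 * X + k22)⁻¹ * k21).det := by
      rw [Matrix.det_fromBlocks₂₂, Matrix.invOf_eq_nonsing_inv]
    have := congrArg Matrix.det h1
    rw [Matrix.det_mul, Matrix.det_fromBlocks_zero₂₁, h2] at this
    simpa using this
  have hne : (k21 * X + k22).det ≠ 0 := hX.ne_zero
  constructor
  · rw [key, ← mul_assoc, inv_mul_cancel₀ hne, one_mul]
  · intro h1'
    rw [h1'] at key
    field_simp [key]
    exact key
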